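/- Let A = ({a,b,c}, Q, δ) be a weakly acyclic automaton with n = |Q| states and let R = { q ∈ Q : δ(q, a) = q and δ(q, b) = q }. Then A has a synchronizing word belonging to the language (a+b)*ca* (i.e., a word of the form u c a^i with u ∈ {a,b}* and i ≥ 0) if and only if there exists an integer i with 0 ≤ i ≤ n such that δ(R, c a^i) is a singleton. -/

import Mathlib

/-- A three-letter alphabet `{a, b, c}`. -/
inductive ABC : Type
  | a | b | c
  deriving DecidableEq

instance instFintypeABC : Fintype ABC :=
  ⟨{ABC.a, ABC.b, ABC.c}, fun x => by cases x <;> simp⟩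

/-- The transition function extended to words: `δ*(q, u)`. -/
def deltaStar {Q A : Type*} (δ : Q → A → Q) (q : Q) (u : List A) : Q :=
  u.foldl δ q

/-- A complete deterministic semi-automaton is weakly acyclic if all simple
cycles are self-loops. -/
def WeaklyAcyclic {Q A : Type*} (δ : Q → A → Q) : Prop :=
  ∀ (q : Q) (u : List A), u ≠ [] → deltaStar δ q u = q → ∀ x ∈ u, δ q x = q

section Aux

variable {Q : Type*} {A : Type*}

lemma deltaStar_append (δ : Q → A → Q) (q : Q) (u v : List A) :
    deltaStar δ q (u ++ v) = deltaStar δ (deltaStar δ q u) v :=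
  List.foldl_append

lemma deltaStar_fixed (δ : Q → A → Q) (u : List A) (q : Q)
    (h : ∀ x ∈ u, δ q x = q) : deltaStar δ q u = q := by
  induction u with
  | nil => rfl
  | cons x l ih =>
    have hx : δ q x = q := h x (by simp)
    show deltaStar δ (δ q x) l = q
    rw [hx]
    exact ih (fun y hy => h y (by simp [hy]))

lemma deltaStar_join_replicate (δ : Q → A → Q) (w : List A) :
    ∀ (k : ℕ) (q : Q),
      deltaStar δ q (List.flatten (List.replicate k w)) =
        (fun p => deltaStar δ p w)^[k] q := by
  intro k
  induction k with
  | zero => intro q; rfl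
  | succ k ih =>
    intro q
    rw [List.replicate_succ, List.flatten_cons, deltaStar_append,
      Function.iterate_succ_apply]
    exact ih _

lemma deltaStar_replicate (δ : Q → A → Q) (x : A) :
    ∀ (k : ℕ) (q : Q),
      deltaStar δ q (List.replicate k x) = (fun p => δ p x)^[k] q := by
  intro k
  induction k with
  | zero => intro q; rfl
  | succ k ih =>
    intro q
    rw [List.replicate_succ, Function.iterate_succ_apply]
    exact ih _

/-- Key stabilization lemma: iterating any nonempty word `card Q` times leads
to a state fixed by every letter of the word. -/
lemma stabilize [Fintype Q] (δ : Q → A → Q) (hwa : WeaklyAcyclic δ)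
    (w : List A) (hw : w ≠ []) (q : Q) :
    ∀ x ∈ w, δ ((fun p => deltaStar δ p w)^[Fintype.card Q] q) x =
      (fun p => deltaStar δ p w)^[Fintype.card Q] q := by
  set n := Fintype.card Q with hn
  set f : Q → Q := fun p => deltaStar δ p w with hf
  have key : ∀ (i j : ℕ), i < j → j ≤ n → f^[i] q = f^[j] q →
      ∃ p, (∀ x ∈ w, δ p x = p) ∧ f^[n] q = p := by
    intro i j hij hjn heq
    have h1 : f^[j - i] (f^[i] q) = f^[i] q := by
      rw [← Function.iterate_add_apply, Nat.sub_add_cancel hij.le, heq]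
    set W := (List.replicate (j - i) w).flatten with hW
    have hmem : ∀ y ∈ w, y ∈ W := by
      intro y hy
      rw [hW, List.mem_flatten]
      exact ⟨w, by simp [List.mem_replicate, Nat.sub_ne_zero_of_lt hij], hy⟩
    have hWne : W ≠ [] := by
      obtain ⟨y, hy⟩ := List.exists_mem_of_ne_nil w hw
      exact List.ne_nil_of_mem (hmem y hy)
    have hWfix : deltaStar δ (f^[i] q) W = f^[i] q := by
      rw [hW, deltaStar_join_replicate]; exact h1
    have hfixall : ∀ x ∈ w, δ (f^[i] q) x = f^[i] q := by
      intro x hx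
      exact hwa _ W hWne hWfix x (hmem x hx)
    refine ⟨f^[i] q, hfixall, ?_⟩
    have hfp : f (f^[i] q) = f^[i] q := deltaStar_fixed δ w _ hfixall
    calc f^[n] q = f^[(n - i) + i] q := by rw [Nat.sub_add_cancel (hij.le.trans hjn)]
    _ = f^[n - i] (f^[i] q) := Function.iterate_add_apply f _ _ q
    _ = f^[i] q := Function.iterate_fixed hfp _
  have hcard : Fintype.card Q < Fintype.card (Fin (n + 1)) := by simp [hn]
  obtain ⟨i, j, hne, heq⟩ :=
    Fintype.exists_ne_map_eq_of_card_lt (fun k : Fin (n + 1) => f^[(k : ℕ)] q) hcard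
  have hres : ∃ p, (∀ x ∈ w, δ p x = p) ∧ f^[n] q = p := by
    rcases hne.lt_or_gt with h | h
    · exact key i j h j.is_le heq
    · exact key j i h i.is_le heq.symm
  obtain ⟨p, hpfix, hpeq⟩ := hres
  intro x hx
  rw [hpeq]
  exact hpfix x hx

end Aux

/-- A weakly acyclic automaton over `{a,b,c}` with `n` states has a
synchronizing word in the language `(a+b)*ca*` iff there is some `0 ≤ i ≤ n`
such that `δ(R, c a^i)` is a singleton, where
`R = {q | δ(q,a) = q ∧ δ(q,b) = q}`. -/
theorem sync_constraint_abStar_c_aStar {Q : Type*} [Fintype Q] [Nonempty Q]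
    (δ : Q → ABC → Q) (hwa : WeaklyAcyclic δ) :
    (∃ (u : List ABC) (i : ℕ), (∀ x ∈ u, x = ABC.a ∨ x = ABC.b) ∧
        ∃ q : Q, ∀ p : Q,
          deltaStar δ p (u ++ [ABC.c] ++ List.replicate i ABC.a) = q) ↔
      ∃ i ≤ Fintype.card Q, ∃ q : Q,
        (fun r => deltaStar δ r (ABC.c :: List.replicate i ABC.a)) ''
          {p : Q | δ p ABC.a = p ∧ δ p ABC.b = p} = {q} := by
  set n := Fintype.card Q with hn
  set g : Q → Q := fun p => deltaStar δ p [ABC.a, ABC.b] with hg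
  -- every state reaches R via g^[n]
  have hreach : ∀ p : Q, δ (g^[n] p) ABC.a = g^[n] p ∧ δ (g^[n] p) ABC.b = g^[n] p := by
    intro p
    have := stabilize δ hwa [ABC.a, ABC.b] (by simp) p
    exact ⟨this ABC.a (by simp), this ABC.b (by simp)⟩
  -- the `a`-transition stabilizes after n steps
  have hastab : ∀ s : Q, δ ((fun p => δ p ABC.a)^[n] s) ABC.a = (fun p => δ p ABC.a)^[n] s := by
    intro s
    have := stabilize δ hwa [ABC.a] (by simp) s ABC.a (by simp)
    exact this
  constructor
  · rintro ⟨u, i, hu, q, hq⟩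
    -- all states of R are sent to q by c a^i
    have hRval : ∀ r : Q, δ r ABC.a = r → δ r ABC.b = r →
        deltaStar δ r (ABC.c :: List.replicate i ABC.a) = q := by
      intro r ha hb
      have hru : deltaStar δ r u = r := by
        apply deltaStar_fixed
        intro x hx
        rcases hu x hx with h | h <;> rw [h] <;> [exact ha; exact hb]
      have := hq r
      rw [deltaStar_append, deltaStar_append, hru] at this
      exact this
    set i' := min i n with hi'
    refine ⟨i', min_le_right i n, q, ?_⟩
    -- c a^{i'} acts the same as c a^i on R
    have hsame : ∀ r : Q,
        deltaStar δ r (ABC.c :: List.replicate i' ABC.a) =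
          deltaStar δ r (ABC.c :: List.replicate i ABC.a) := by
      intro r
      rcases le_or_gt i n with h | h
      · rw [hi', min_eq_left h]
      · rw [hi', min_eq_right h.le]
        show deltaStar δ (δ r ABC.c) (List.replicate n ABC.a) =
          deltaStar δ (δ r ABC.c) (List.replicate i ABC.a)
        rw [deltaStar_replicate, deltaStar_replicate]
        set s := δ r ABC.c
        set fa : Q → Q := fun p => δ p ABC.a with hfa
        have : fa^[i] s = fa^[(i - n) + n] s := by rw [Nat.sub_add_cancel h.le]
        rw [this, Function.iterate_add_apply, Function.iterate_fixed (hastab s) (i - n)]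
    -- R is nonempty
    obtain ⟨p0⟩ := ‹Nonempty Q›
    have hr0 := hreach p0
    ext y
    constructor
    · rintro ⟨r, ⟨hra, hrb⟩, rfl⟩
      simp only [Set.mem_singleton_iff]
      rw [hsame r]
      exact hRval r hra hrb
    · rintro hy
      simp only [Set.mem_singleton_iff] at hy
      subst hy
      exact ⟨g^[n] p0, ⟨hr0.1, hr0.2⟩, (hsame _).trans (hRval _ hr0.1 hr0.2)⟩
  · rintro ⟨i, hi, q, himg⟩
    refine ⟨(List.replicate n [ABC.a, ABC.b]).flatten, i, ?_, q, ?_⟩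
    · intro x hx
      rw [List.mem_flatten] at hx
      obtain ⟨l, hl, hxl⟩ := hx
      rw [List.mem_replicate] at hl
      rw [hl.2] at hxl
      simpa using hxl
    · intro p
      rw [deltaStar_append, deltaStar_append, deltaStar_join_replicate]
      have hrR : g^[n] p ∈ {p : Q | δ p ABC.a = p ∧ δ p ABC.b = p} := hreach p
      have hmem : (fun r => deltaStar δ r (ABC.c :: List.replicate i ABC.a)) (g^[n] p) ∈
          (fun r => deltaStar δ r (ABC.c :: List.replicate i ABC.a)) ''
            {p : Q | δ p ABC.a = p ∧ δ p ABC.b = p} :=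
        Set.mem_image_of_mem _ hrR
      rw [himg, Set.mem_singleton_iff] at hmem
      exact hmem
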